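/- Let W be a plane in P⁵ meeting a curve C at three non-collinear points p, q, r, and let F be a cubic form on P⁵ vanishing to order 3 at every point of C. Then F vanishes identically on W. -/

import Mathlib

open MvPolynomial

/-- Substitute `X i ↦ s i + y i * T`, turning a multivariate polynomial into a
single-variable polynomial in `T`. -/
noncomputable def stmt12.psi (s y : Fin 6 → ℂ) :
    MvPolynomial (Fin 6) ℂ →+* Polynomial ℂ :=
  eval₂Hom Polynomial.C (fun i => Polynomial.C (s i) + Polynomial.C (y i) * Polynomial.X)

namespace stmt12

lemma psi_eval (s y : Fin 6 → ℂ) (F : MvPolynomial (Fin 6) ℂ) (t : ℂ) :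
    (psi s y F).eval t = MvPolynomial.eval (fun i => s i + y i * t) F := by
  have h := MvPolynomial.eval₂_comp_left (Polynomial.evalRingHom t)
      (Polynomial.C : ℂ →+* Polynomial ℂ)
      (fun i => Polynomial.C (s i) + Polynomial.C (y i) * Polynomial.X) F
  have h1 : (Polynomial.evalRingHom t).comp (Polynomial.C : ℂ →+* Polynomial ℂ)
      = RingHom.id ℂ := by
    ext a; simp
  simp only [psi, coe_eval₂Hom]
  calc (MvPolynomial.eval₂ Polynomial.C
          (fun i => Polynomial.C (s i) + Polynomial.C (y i) * Polynomial.X) F).eval t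
      = (Polynomial.evalRingHom t) (MvPolynomial.eval₂ Polynomial.C
          (fun i => Polynomial.C (s i) + Polynomial.C (y i) * Polynomial.X) F) := rfl
    _ = MvPolynomial.eval₂ ((Polynomial.evalRingHom t).comp Polynomial.C)
          ((Polynomial.evalRingHom t) ∘ fun i =>
            Polynomial.C (s i) + Polynomial.C (y i) * Polynomial.X) F := h
    _ = MvPolynomial.eval (fun i => s i + y i * t) F := by
          rw [h1]
          simp only [MvPolynomial.eval, Function.comp_def, Polynomial.coe_evalRingHom,
            Polynomial.eval_add, Polynomial.eval_C, Polynomial.eval_mul, Polynomial.eval_X,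
            coe_eval₂Hom]

lemma psi_eval_zero (s y : Fin 6 → ℂ) (F : MvPolynomial (Fin 6) ℂ) :
    (psi s y F).eval 0 = MvPolynomial.eval s F := by
  simpa using psi_eval s y F 0

lemma psi_derivative (s y : Fin 6 → ℂ) (F : MvPolynomial (Fin 6) ℂ) :
    Polynomial.derivative (psi s y F)
      = ∑ i, Polynomial.C (y i) * psi s y (pderiv i F) := by
  induction F using MvPolynomial.induction_on with
  | C a => simp [psi]
  | add f g hf hg =>
      simp only [map_add, hf, hg, mul_add, ← Finset.sum_add_distrib]
  | mul_X f j hf =>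
      have hXj : psi s y (X j) = Polynomial.C (s j) + Polynomial.C (y j) * Polynomial.X := by
        simp [psi]
      have hpd : ∀ i : Fin 6, pderiv i (f * X j)
          = pderiv i f * X j + (if i = j then f else 0) := by
        intro i
        rw [pderiv_mul]
        by_cases h : i = j
        · subst h; simp
        · simp [pderiv_X_of_ne (Ne.symm h), h]
      have hRHS : ∑ i, Polynomial.C (y i) * psi s y (pderiv i (f * X j))
          = (∑ i, Polynomial.C (y i) * psi s y (pderiv i f)) * psi s y (X j)
            + Polynomial.C (y j) * psi s y f := by
        have hterm : ∀ i : Fin 6, Polynomial.C (y i) * psi s y (pderiv i (f * X j))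
            = Polynomial.C (y i) * psi s y (pderiv i f) * psi s y (X j)
              + (if i = j then Polynomial.C (y j) * psi s y f else 0) := by
          intro i
          rw [hpd i, map_add, map_mul, mul_add]
          congr 1
          · ring
          · by_cases h : i = j
            · subst h; simp
            · simp [h]
        rw [Finset.sum_congr rfl fun i _ => hterm i, Finset.sum_add_distrib, Finset.sum_mul]
        simp
      rw [map_mul, Polynomial.derivative_mul, hf, hRHS]
      have hdX : Polynomial.derivative (psi s y (X j)) = Polynomial.C (y j) := by
        rw [hXj]; simp
      rw [hdX]
      ring

lemma psi_natDegree_le (s y : Fin 6 → ℂ) (F : MvPolynomial (Fin 6) ℂ) :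
    (psi s y F).natDegree ≤ F.totalDegree := by
  conv_lhs => rw [F.as_sum]
  rw [map_sum]
  apply Polynomial.natDegree_sum_le_of_forall_le
  intro d hd
  have : psi s y (monomial d (coeff d F))
      = Polynomial.C (coeff d F) * d.prod fun i e =>
          (Polynomial.C (s i) + Polynomial.C (y i) * Polynomial.X) ^ e := by
    simp [psi, eval₂_monomial]
  rw [this]
  refine le_trans Polynomial.natDegree_mul_le ?_
  rw [Polynomial.natDegree_C, zero_add]
  unfold Finsupp.prod
  beta_reduce
  refine le_trans (Polynomial.natDegree_prod_le (s := d.support)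
    (f := fun a => (Polynomial.C (s a) + Polynomial.C (y a) * Polynomial.X) ^ d a)) ?_
  refine le_trans (Finset.sum_le_sum (fun i _ => ?_)) (le_totalDegree hd)
  have hb : (Polynomial.C (s i) + Polynomial.C (y i) * Polynomial.X).natDegree ≤ 1 := by
    refine le_trans (Polynomial.natDegree_add_le _ _) ?_
    simp only [Polynomial.natDegree_C, max_le_iff]
    exact ⟨Nat.zero_le 1, le_trans Polynomial.natDegree_mul_le (by simp)⟩
  refine le_trans Polynomial.natDegree_pow_le ?_
  calc d i * (Polynomial.C (s i) + Polynomial.C (y i) * Polynomial.X).natDegree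
      ≤ d i * 1 := Nat.mul_le_mul_left _ hb
    _ = d i := mul_one _

lemma eval_smul_homog {F : MvPolynomial (Fin 6) ℂ} {n : ℕ} (hF : F.IsHomogeneous n)
    (t : ℂ) (x : Fin 6 → ℂ) :
    MvPolynomial.eval (t • x) F = t ^ n * MvPolynomial.eval x F := by
  rw [eval_eq, eval_eq, Finset.mul_sum]
  apply Finset.sum_congr rfl
  intro d hd
  have hdeg : ∑ i ∈ d.support, d i = n := by
    have h := hF (mem_support_iff.mp hd)
    rw [show (1 : Fin 6 → ℕ) = fun _ => 1 from rfl, ← Finsupp.degree_eq_weight_one] at h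
    exact h
  have : ∀ i ∈ d.support, (t • x) i ^ d i = t ^ d i * x i ^ d i := by
    intro i _
    simp [mul_pow]
  rw [Finset.prod_congr rfl this, Finset.prod_mul_distrib, Finset.prod_pow_eq_pow_sum, hdeg]
  ring

lemma isHomog_pderiv {F : MvPolynomial (Fin 6) ℂ} {n : ℕ} (hF : F.IsHomogeneous (n + 1))
    (i : Fin 6) : (pderiv i F).IsHomogeneous n := by
  have hrw : pderiv i F = ∑ d ∈ F.support,
      monomial (d - Finsupp.single i 1) (coeff d F * d i) := by
    conv_lhs => rw [F.as_sum]
    rw [map_sum]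
    exact Finset.sum_congr rfl fun d _ => pderiv_monomial
  rw [hrw]
  apply MvPolynomial.IsHomogeneous.sum
  intro d hd
  by_cases hdi : d i = 0
  · rw [hdi]
    simp only [Nat.cast_zero, mul_zero, map_zero]
    exact isHomogeneous_zero _ _ _
  · apply isHomogeneous_monomial
    have h1 : Finsupp.single i 1 ≤ d :=
      Finsupp.single_le_iff.mpr (Nat.one_le_iff_ne_zero.mpr hdi)
    have h2 : (d - Finsupp.single i 1) + Finsupp.single i 1 = d := tsub_add_cancel_of_le h1
    have hdeg : Finsupp.degree d = n + 1 := by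
      rw [Finsupp.degree_eq_weight_one]
      exact hF (mem_support_iff.mp hd)
    have h3 := congrArg (Finsupp.weight (1 : Fin 6 → ℕ)) h2
    rw [map_add] at h3
    have h4 : (Finsupp.weight (1 : Fin 6 → ℕ)) (Finsupp.single i 1) = 1 := by
      rw [Finsupp.weight_apply, Finsupp.sum_single_index] <;> simp
    rw [Finsupp.degree_eq_weight_one] at hdeg ⊢
    rw [show (1 : Fin 6 → ℕ) = fun _ => 1 from rfl] at h3 h4
    omega

lemma translate {F : MvPolynomial (Fin 6) ℂ} (hF : F.IsHomogeneous 3) (s y : Fin 6 → ℂ)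
    (h0 : MvPolynomial.eval s F = 0) (h1 : ∀ i, MvPolynomial.eval s (pderiv i F) = 0)
    (h2 : ∀ i j, MvPolynomial.eval s (pderiv i (pderiv j F)) = 0) :
    MvPolynomial.eval (s + y) F = MvPolynomial.eval y F := by
  set g := psi s y F with hg
  have hc0 : g.coeff 0 = 0 := by
    rw [Polynomial.coeff_zero_eq_eval_zero, hg, psi_eval_zero, h0]
  have hd1 : Polynomial.derivative g = ∑ i, Polynomial.C (y i) * psi s y (pderiv i F) :=
    psi_derivative s y F
  have hder0 : (Polynomial.derivative g).eval 0 = 0 := by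
    rw [hd1, Polynomial.eval_finset_sum]
    refine Finset.sum_eq_zero fun i _ => ?_
    rw [Polynomial.eval_mul, Polynomial.eval_C, psi_eval_zero, h1 i, mul_zero]
  have hc1 : g.coeff 1 = 0 := by
    have h := Polynomial.coeff_derivative g 0
    rw [← Polynomial.coeff_zero_eq_eval_zero] at hder0
    rw [hder0] at h
    have := h.symm
    simpa using this
  have hd2 : Polynomial.derivative (Polynomial.derivative g)
      = ∑ i, Polynomial.C (y i) * ∑ j, Polynomial.C (y j) * psi s y (pderiv j (pderiv i F)) := by
    rw [hd1, map_sum]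
    refine Finset.sum_congr rfl fun i _ => ?_
    rw [Polynomial.derivative_C_mul, psi_derivative]
  have hder20 : (Polynomial.derivative (Polynomial.derivative g)).coeff 0 = 0 := by
    rw [Polynomial.coeff_zero_eq_eval_zero, hd2, Polynomial.eval_finset_sum]
    refine Finset.sum_eq_zero fun i _ => ?_
    rw [Polynomial.eval_mul, Polynomial.eval_C, Polynomial.eval_finset_sum]
    have : ∑ j, (Polynomial.C (y j) * psi s y (pderiv j (pderiv i F))).eval 0 = 0 := by
      refine Finset.sum_eq_zero fun j _ => ?_
      rw [Polynomial.eval_mul, Polynomial.eval_C, psi_eval_zero, h2 j i, mul_zero]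
    rw [this, mul_zero]
  have hc2 : g.coeff 2 = 0 := by
    have ha := Polynomial.coeff_derivative (Polynomial.derivative g) 0
    have hb := Polynomial.coeff_derivative g 1
    rw [hb, hder20] at ha
    have key2 : g.coeff (1 + 1) * 2 = 0 := by
      push_cast at ha
      linear_combination -ha
    have key3 : g.coeff 2 * 2 = 0 := key2
    exact (mul_eq_zero.mp key3).resolve_right two_ne_zero
  have hdeg : g.natDegree < 4 :=
    lt_of_le_of_lt (le_trans (psi_natDegree_le s y F) hF.totalDegree_le) (by norm_num)
  set a := g.coeff 3 with hadef
  have heval : ∀ t : ℂ, g.eval t = a * t ^ 3 := by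
    intro t
    rw [Polynomial.eval_eq_sum_range' hdeg]
    rw [Finset.sum_range_succ, Finset.sum_range_succ, Finset.sum_range_succ,
      Finset.sum_range_one, hc0, hc1, hc2]
    ring
  -- For all nonzero ε, eval (ε • s + y) F = a
  have key : ∀ ε : ℂ, ε ≠ 0 → MvPolynomial.eval (ε • s + y) F = a := by
    intro ε hε
    have ht : (ε⁻¹ : ℂ) ≠ 0 := inv_ne_zero hε
    have h := psi_eval s y F ε⁻¹
    rw [← hg] at h
    have hfun : (fun i => s i + y i * ε⁻¹) = ε⁻¹ • (ε • s + y) := by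
      funext i
      simp only [Pi.smul_apply, Pi.add_apply, smul_eq_mul]
      field_simp
    rw [hfun, eval_smul_homog hF, heval ε⁻¹] at h
    have hc : (ε⁻¹ : ℂ) ^ 3 ≠ 0 := pow_ne_zero _ ht
    exact (mul_left_cancel₀ hc ((mul_comm _ a).trans h)).symm
  -- The polynomial psi y s F is constantly a on nonzero inputs, hence equals C a
  have hconst : psi y s F = Polynomial.C a := by
    have hroots : {ε : ℂ | (psi y s F - Polynomial.C a).IsRoot ε}.Infinite := by
      apply Set.Infinite.mono (s := {(0 : ℂ)}ᶜ)
      · intro ε hε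
        simp only [Set.mem_setOf_eq, Polynomial.IsRoot, Polynomial.eval_sub,
          Polynomial.eval_C, sub_eq_zero]
        rw [psi_eval]
        have hfun : (fun i => y i + s i * ε) = ε • s + y := by
          funext i
          simp only [Pi.smul_apply, Pi.add_apply, smul_eq_mul]
          ring
        rw [hfun]
        exact key ε hε
      · exact Set.Finite.infinite_compl (Set.finite_singleton 0)
    have := Polynomial.eq_zero_of_infinite_isRoot _ hroots
    linear_combination (norm := ring_nf) this
  have hy : MvPolynomial.eval y F = a := by
    have := psi_eval_zero y s F
    rw [hconst, Polynomial.eval_C] at this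
    exact this.symm
  have hsy : MvPolynomial.eval (s + y) F = a := by
    have h := psi_eval s y F 1
    rw [← hg] at h
    have hfun : (fun i => s i + y i * 1) = s + y := by funext i; simp
    rw [hfun, heval 1] at h
    rw [← h]; ring
  rw [hsy, hy]

end stmt12

/-- Let `W` be a plane in `ℙ⁵` (a 3-dimensional linear subspace of `ℂ⁶`) meeting a curve
`C` (given by its affine cone, a subset of `ℂ⁶`) at three non-collinear points `p, q, r`,
and let `F` be a cubic form on `ℙ⁵` vanishing to order 3 at every point of `C` (i.e. `F`,
its first partials, and its second partials vanish along `C`). Then `F` vanishes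
identically on `W`. -/
theorem stmt12 (F : MvPolynomial (Fin 6) ℂ) (hF : F.IsHomogeneous 3)
    (Ccurve : Set (Fin 6 → ℂ)) (W : Submodule ℂ (Fin 6 → ℂ))
    (hW : Module.finrank ℂ W = 3)
    (p q r : Fin 6 → ℂ)
    (hp : p ∈ Ccurve ∧ p ∈ W) (hq : q ∈ Ccurve ∧ q ∈ W) (hr : r ∈ Ccurve ∧ r ∈ W)
    (hind : LinearIndependent ℂ ![p, q, r])
    (hvan : ∀ s ∈ Ccurve,
      eval s F = 0 ∧ (∀ i, eval s (pderiv i F) = 0) ∧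
        ∀ i j, eval s (pderiv i (pderiv j F)) = 0) :
    ∀ x ∈ W, eval x F = 0 := by
  have hpd2 : ∀ i, (pderiv i F).IsHomogeneous 2 := fun i => stmt12.isHomog_pderiv hF i
  have hpd1 : ∀ i j, (pderiv i (pderiv j F)).IsHomogeneous 1 := fun i j =>
    stmt12.isHomog_pderiv (hpd2 j) i
  have hsc : ∀ s ∈ Ccurve, ∀ t : ℂ,
      eval (t • s) F = 0 ∧ (∀ i, eval (t • s) (pderiv i F) = 0) ∧
        ∀ i j, eval (t • s) (pderiv i (pderiv j F)) = 0 := by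
    intro s hs t
    obtain ⟨e0, e1, e2⟩ := hvan s hs
    exact ⟨by rw [stmt12.eval_smul_homog hF, e0, mul_zero],
      fun i => by rw [stmt12.eval_smul_homog (hpd2 i), e1 i, mul_zero],
      fun i j => by rw [stmt12.eval_smul_homog (hpd1 i j), e2 i j, mul_zero]⟩
  intro x hx
  have hle : Submodule.span ℂ (Set.range ![p, q, r]) ≤ W := by
    rw [Submodule.span_le]
    rintro v ⟨i, rfl⟩
    fin_cases i
    · simpa using hp.2
    · simpa using hq.2
    · simpa using hr.2
  have hfr : Module.finrank ℂ (Submodule.span ℂ (Set.range ![p, q, r])) = 3 := by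
    rw [finrank_span_eq_card hind]
    simp
  have hspan : Submodule.span ℂ (Set.range ![p, q, r]) = W :=
    Submodule.eq_of_le_of_finrank_le hle (by rw [hW, hfr])
  rw [← hspan] at hx
  obtain ⟨c, hc⟩ := (Submodule.mem_span_range_iff_exists_fun ℂ).mp hx
  have hx' : x = c 0 • p + (c 1 • q + c 2 • r) := by
    rw [← hc, Fin.sum_univ_three]
    simp [add_assoc]
  rw [hx']
  obtain ⟨e0p, e1p, e2p⟩ := hsc p hp.1 (c 0)
  rw [stmt12.translate hF _ _ e0p e1p e2p]
  obtain ⟨e0q, e1q, e2q⟩ := hsc q hq.1 (c 1)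
  rw [stmt12.translate hF _ _ e0q e1q e2q]
  rw [stmt12.eval_smul_homog hF, (hvan r hr.1).1, mul_zero]
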